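/- The subdifferential of the indicator function of the convex set C = {x ∈ ℝⁿ | φ(x) ≤ 0}, where φ : ℝⁿ → ℝᵏ has convex differentiable components and C satisfies Slater's condition (there is x̄ with φ(x̄) < 0 componentwise), equals at every x ∈ C the set {∑ᵢ λᵢ ∇φᵢ(x) | λ ≥ 0, λᵢ φᵢ(x) = 0 for all i}; and at x ∉ C the subdifferential is empty. -/

import Mathlib

open Classical

open RealInnerProductSpace

section Aux

variable {n : ℕ}

local notation "E" => EuclideanSpace ℝ (Fin n)

/-- Derivative of a function along a line, from the gradient. -/
lemma auxHasDerivAt_line {f : E → ℝ} {g x : E} (hg : HasGradientAt f g x) (w : E) :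
    HasDerivAt (fun t : ℝ => f (x + t • w)) ⟪g, w⟫ 0 := by
  have hline : HasDerivAt (fun t : ℝ => x + t • w) w 0 := by
    simpa using ((hasDerivAt_id (0 : ℝ)).smul_const w).const_add x
  have hfd : HasFDerivAt f (InnerProductSpace.toDual ℝ E g) x := hg.hasFDerivAt
  have hfd' : HasFDerivAt f (InnerProductSpace.toDual ℝ E g) ((fun t : ℝ => x + t • w) 0) := by
    simpa using hfd
  have := hfd'.comp_hasDerivAt (0 : ℝ) hline
  exact this

/-- First-order condition for convex differentiable functions. -/
lemma auxGradIneq {f : E → ℝ} {g x : E} (hf : ConvexOn ℝ Set.univ f)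
    (hg : HasGradientAt f g x) (y : E) : ⟪g, y - x⟫ ≤ f y - f x := by
  set v := y - x with hv
  have hψ : HasDerivAt (fun t : ℝ => f (x + t • v)) ⟪g, v⟫ 0 := auxHasDerivAt_line hg v
  have hs : Filter.Tendsto (slope (fun t : ℝ => f (x + t • v)) 0) (nhdsWithin 0 (Set.Ioi 0))
      (nhds ⟪g, v⟫) :=
    (hasDerivAt_iff_tendsto_slope.mp hψ).mono_left
      (nhdsWithin_mono _ fun t ht => ne_of_gt ht)
  refine le_of_tendsto hs ?_
  filter_upwards [Ioo_mem_nhdsGT_of_mem (by norm_num : (0:ℝ) ∈ Set.Ico 0 1),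
    self_mem_nhdsWithin] with t ht ht0
  have ht0' : (0:ℝ) < t := ht0
  have ht1 : t < 1 := ht.2
  have hcomb : f ((1 - t) • x + t • y) ≤ (1 - t) * f x + t * f y :=
    hf.2 (Set.mem_univ x) (Set.mem_univ y) (by linarith) ht0'.le (by ring)
  have hxy : (1 - t) • x + t • y = x + t • v := by
    rw [hv]; module
  rw [hxy] at hcomb
  rw [slope_def_field]
  have h0 : f (x + (0:ℝ) • v) = f x := by norm_num
  rw [h0]
  rw [div_le_iff₀ (by simpa using ht0')]
  ring_nf
  ring_nf at hcomb
  linarith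

/-- A finitely generated cone in Euclidean space is closed. -/
lemma auxIsClosedCone : ∀ (m : ℕ) (v : Fin m → E),
    IsClosed {z : E | ∃ l : Fin m → ℝ, (∀ i, 0 ≤ l i) ∧ z = ∑ i, l i • v i} := by
  intro m
  induction m with
  | zero =>
    intro v
    have : {z : E | ∃ l : Fin 0 → ℝ, (∀ i, 0 ≤ l i) ∧ z = ∑ i, l i • v i} = {0} := by
      ext z
      simp only [Set.mem_setOf_eq, Set.mem_singleton_iff]
      constructor
      · rintro ⟨l, -, rfl⟩; simp
      · rintro rfl; exact ⟨fun i => 0, fun i => le_rfl, by simp⟩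
    rw [this]; exact isClosed_singleton
  | succ m ih =>
    intro v
    by_cases hli : LinearIndependent ℝ v
    · -- linearly independent generators: closed embedding argument
      let T : EuclideanSpace ℝ (Fin (m + 1)) →ₗ[ℝ] E :=
        { toFun := fun l => ∑ i, l i • v i
          map_add' := by
            intro a b
            simp [add_smul, Finset.sum_add_distrib]
          map_smul' := by
            intro c a
            simp [smul_smul, Finset.smul_sum] }
      have hker : LinearMap.ker T = ⊥ := by
        rw [LinearMap.ker_eq_bot']
        intro a ha
        have : ∀ i, a i = 0 := Fintype.linearIndependent_iff.mp hli a ha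
        ext i
        exact this i
      have hce := LinearMap.isClosedEmbedding_of_injective (𝕜 := ℝ) hker
      have hset : IsClosed {l : EuclideanSpace ℝ (Fin (m + 1)) | ∀ i, 0 ≤ l i} := by
        have : {l : EuclideanSpace ℝ (Fin (m + 1)) | ∀ i, 0 ≤ l i}
            = ⋂ i, {l : EuclideanSpace ℝ (Fin (m + 1)) | 0 ≤ l i} := by
          ext l; simp [Set.mem_iInter]
        rw [this]
        exact isClosed_iInter fun i =>
          isClosed_le continuous_const (EuclideanSpace.proj (𝕜 := ℝ) i).continuous
      have himg : {z : E | ∃ l : Fin (m + 1) → ℝ, (∀ i, 0 ≤ l i) ∧ z = ∑ i, l i • v i}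
          = T '' {l : EuclideanSpace ℝ (Fin (m + 1)) | ∀ i, 0 ≤ l i} := by
        ext z
        constructor
        · rintro ⟨l, hl, rfl⟩
          exact ⟨WithLp.toLp 2 l, hl, rfl⟩
        · rintro ⟨l, hl, rfl⟩
          exact ⟨l, hl, rfl⟩
      rw [himg]
      exact hce.isClosedMap _ hset
    · -- linearly dependent: reduce to fewer generators
      obtain ⟨c, hcsum, j0, hj0⟩ :
          ∃ c : Fin (m + 1) → ℝ, ∑ i, c i • v i = 0 ∧ ∃ j, c j < 0 := by
        obtain ⟨c, hcs, i0, hi0⟩ := Fintype.not_linearIndependent_iff.mp hli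
        rcases lt_or_gt_of_ne hi0 with h | h
        · exact ⟨c, hcs, i0, h⟩
        · refine ⟨-c, ?_, i0, by simpa using h⟩
          simp only [Pi.neg_apply, neg_smul, Finset.sum_neg_distrib, hcs, neg_zero]
      have key : {z : E | ∃ l : Fin (m + 1) → ℝ, (∀ i, 0 ≤ l i) ∧ z = ∑ i, l i • v i}
          = ⋃ j ∈ {j : Fin (m + 1) | c j < 0},
            {z : E | ∃ l : Fin m → ℝ, (∀ i, 0 ≤ l i) ∧ z = ∑ i, l i • v (j.succAbove i)} := by
        ext z
        simp only [Set.mem_setOf_eq, Set.mem_iUnion, exists_prop]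
        constructor
        · rintro ⟨l, hl, rfl⟩
          set s : Finset (Fin (m + 1)) := Finset.univ.filter fun i => c i < 0 with hs
          have hsne : s.Nonempty := ⟨j0, by simp [hs, hj0]⟩
          set t : ℝ := s.inf' hsne fun i => l i / (-(c i)) with htdef
          have ht0 : 0 ≤ t := by
            apply Finset.le_inf'
            intro i hi
            have hci : c i < 0 := by simpa [hs] using hi
            exact div_nonneg (hl i) (by linarith)
          obtain ⟨j, hjs, hjt⟩ := s.exists_mem_eq_inf' hsne fun i => l i / (-(c i))
          have hcj : c j < 0 := by simpa [hs] using hjs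
          set l' : Fin (m + 1) → ℝ := fun i => l i + t * c i with hl'def
          have hl' : ∀ i, 0 ≤ l' i := by
            intro i
            rcases le_or_gt 0 (c i) with h | h
            · have : 0 ≤ t * c i := mul_nonneg ht0 h
              simp only [hl'def]
              linarith [hl i]
            · have his : i ∈ s := by simp [hs, h]
              have hti : t ≤ l i / (-(c i)) := Finset.inf'_le _ his
              have h2 : t * (-(c i)) ≤ l i := by
                rw [← le_div_iff₀ (by linarith : (0:ℝ) < -(c i))]
                exact hti
              simp only [hl'def]
              nlinarith
          have hlj : l' j = 0 := by
            have hcj' : c j ≠ 0 := ne_of_lt hcj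
            show l j + t * c j = 0
            rw [← htdef] at hjt
            rw [hjt, div_mul_eq_mul_div, div_neg, mul_div_assoc, div_self hcj', mul_one]
            ring
          have hsum' : ∑ i, l' i • v i = ∑ i, l i • v i := by
            simp only [hl'def, add_smul, mul_smul]
            rw [Finset.sum_add_distrib, ← Finset.smul_sum, hcsum, smul_zero, add_zero]
          refine ⟨j, hcj, fun i => l' (j.succAbove i), fun i => hl' _, ?_⟩
          rw [← hsum', Fin.sum_univ_succAbove (fun i => l' i • v i) j, hlj, zero_smul, zero_add]
        · rintro ⟨j, hcj, l', hl', rfl⟩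
          refine ⟨fun i => Fin.insertNth (α := fun _ : Fin (m + 1) => ℝ) j 0 l' i, ?_, ?_⟩
          · intro i
            rcases eq_or_ne i j with rfl | h
            · simpa only [Fin.insertNth_apply_same] using le_rfl
            · obtain ⟨i', rfl⟩ := Fin.exists_succAbove_eq h
              simpa only [Fin.insertNth_apply_succAbove] using hl' i'
          · rw [Fin.sum_univ_succAbove
              (fun i => Fin.insertNth (α := fun _ : Fin (m + 1) => ℝ) j 0 l' i • v i) j]
            simp [Fin.insertNth_apply_same, Fin.insertNth_apply_succAbove]
      rw [key]
      exact Set.Finite.isClosed_biUnion (Set.toFinite _) fun j _ =>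
        ih fun i => v (j.succAbove i)

end Aux

/-- The subdifferential of the indicator function of `C = {x | ∀ i, φ i x ≤ 0}`
(with each `φ i` convex and differentiable, and Slater's condition holding)
equals at every `x ∈ C` the set of nonnegative combinations `∑ i, λ i • ∇φ i x`
with complementary slackness, and is empty at every `x ∉ C`. -/
theorem stmt0 {n k : ℕ}
    (φ : Fin k → EuclideanSpace ℝ (Fin n) → ℝ)
    (gφ : Fin k → EuclideanSpace ℝ (Fin n) → EuclideanSpace ℝ (Fin n))
    (hconv : ∀ i, ConvexOn ℝ Set.univ (φ i))
    (hgrad : ∀ i x, HasGradientAt (φ i) (gφ i x) x)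
    (C : Set (EuclideanSpace ℝ (Fin n)))
    (hC : C = {x | ∀ i, φ i x ≤ 0})
    (ind : EuclideanSpace ℝ (Fin n) → EReal)
    (hind : ∀ x, ind x = if x ∈ C then (0 : EReal) else ⊤)
    (subdiff : EuclideanSpace ℝ (Fin n) → Set (EuclideanSpace ℝ (Fin n)))
    (hsubdiff : ∀ x, subdiff x =
      {g | ∀ y, ind x + ((⟪g, y - x⟫ : ℝ) : EReal) ≤ ind y})
    (slater : ∃ xbar, ∀ i, φ i xbar < 0) :
    (∀ x ∈ C, subdiff x =
      {g | ∃ lam : Fin k → ℝ, (∀ i, 0 ≤ lam i) ∧ (∀ i, lam i * φ i x = 0) ∧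
        g = ∑ i, lam i • gφ i x}) ∧
    (∀ x ∉ C, subdiff x = ∅) := by
  obtain ⟨xbar, hxbar⟩ := slater
  have hxbarC : xbar ∈ C := by rw [hC]; exact fun i => (hxbar i).le
  constructor
  · -- x ∈ C
    intro x hx
    have hxC : ∀ i, φ i x ≤ 0 := by rw [hC] at hx; exact hx
    rw [hsubdiff x]
    ext g
    simp only [Set.mem_setOf_eq]
    constructor
    · intro h
      -- normal cone property
      have hnc : ∀ y ∈ C, ⟪g, y - x⟫ ≤ 0 := by
        intro y hy
        have h1 := h y
        rw [hind x, hind y, if_pos hx, if_pos hy, zero_add] at h1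
        exact_mod_cast h1
      set u : Fin k → EuclideanSpace ℝ (Fin n) :=
        fun i => if φ i x = 0 then gφ i x else 0 with hu
      set S : Set (EuclideanSpace ℝ (Fin n)) :=
        {z | ∃ l : Fin k → ℝ, (∀ i, 0 ≤ l i) ∧ z = ∑ i, l i • u i} with hS
      have hgS : g ∈ S := by
        by_contra hgS
        -- build the convex cone and separate
        set K : ConvexCone ℝ (EuclideanSpace ℝ (Fin n)) :=
          { carrier := S
            smul_mem' := by
              rintro c hc z ⟨l, hl, rfl⟩
              refine ⟨fun i => c * l i, fun i => mul_nonneg hc.le (hl i), ?_⟩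
              rw [Finset.smul_sum]
              simp [smul_smul]
            add_mem' := by
              rintro z1 ⟨l1, hl1, rfl⟩ z2 ⟨l2, hl2, rfl⟩
              refine ⟨fun i => l1 i + l2 i, fun i => add_nonneg (hl1 i) (hl2 i), ?_⟩
              rw [← Finset.sum_add_distrib]
              simp [add_smul] } with hK
        have hKne : (K : Set (EuclideanSpace ℝ (Fin n))).Nonempty :=
          ⟨0, ⟨fun _ => 0, fun _ => le_rfl, by simp⟩⟩
        have hKcl : IsClosed (K : Set (EuclideanSpace ℝ (Fin n))) := auxIsClosedCone k u
        obtain ⟨y, hy1, hy2⟩ :=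
          ProperCone.hyperplane_separation' (⟨K.toPointedCone
            (ConvexCone.Pointed.of_nonempty_of_isClosed hKne hKcl), hKcl⟩ :
            ProperCone ℝ (EuclideanSpace ℝ (Fin n))) hgS
        set d : EuclideanSpace ℝ (Fin n) := -y with hd
        have hgd : 0 < ⟪g, d⟫ := by
          rw [hd, inner_neg_right, real_inner_comm]
          linarith [real_inner_comm g y]
        have hud : ∀ i, φ i x = 0 → ⟪gφ i x, d⟫ ≤ 0 := by
          intro i hact
          have hui : u i ∈ K := by
            refine ⟨fun i' => if i' = i then 1 else 0, fun i' => by positivity, ?_⟩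
            simp [Finset.sum_ite_eq']
          have := hy1 _ hui
          rw [hu] at hui
          have h2 : (0:ℝ) ≤ ⟪gφ i x, y⟫ := by
            have h3 := hy1 (u i) hui
            simpa [hu, hact] using h3
          rw [hd, inner_neg_right]
          linarith
        have hbar : ∀ i, φ i x = 0 → ⟪gφ i x, xbar - x⟫ < 0 := by
          intro i hact
          have := auxGradIneq (hconv i) (hgrad i x) xbar
          have h4 := hxbar i
          rw [hact] at this
          linarith
        set a : ℝ := ⟪g, xbar - x⟫ with ha
        set ε : ℝ := ⟪g, d⟫ / (2 * (|a| + 1)) with hε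
        have habs : (0:ℝ) < |a| + 1 := by positivity
        have hεpos : 0 < ε := div_pos hgd (by positivity)
        have h1 : ε * (|a| + 1) = ⟪g, d⟫ / 2 := by
          rw [hε]; field_simp
        have h2 : -(⟪g, d⟫ / 2) ≤ ε * a := by
          nlinarith [neg_abs_le a, hεpos.le]
        set w : EuclideanSpace ℝ (Fin n) := d + ε • (xbar - x) with hw
        have hgw : 0 < ⟪g, w⟫ := by
          rw [hw, inner_add_right, real_inner_smul_right]
          have : ⟪g, xbar - x⟫ = a := rfl
          rw [this]
          linarith
        have hev : ∀ i : Fin k, ∀ᶠ t in nhdsWithin (0:ℝ) (Set.Ioi 0),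
            φ i (x + t • w) ≤ 0 := by
          intro i
          have hψ : HasDerivAt (fun t : ℝ => φ i (x + t • w)) ⟪gφ i x, w⟫ 0 :=
            auxHasDerivAt_line (hgrad i x) w
          by_cases hact : φ i x = 0
          · have hneg : ⟪gφ i x, w⟫ < 0 := by
              rw [hw, inner_add_right, real_inner_smul_right]
              have h5 := hud i hact
              have h6 := hbar i hact
              nlinarith
            have hs : Filter.Tendsto (slope (fun t : ℝ => φ i (x + t • w)) 0)
                (nhdsWithin 0 (Set.Ioi 0)) (nhds ⟪gφ i x, w⟫) :=
              (hasDerivAt_iff_tendsto_slope.mp hψ).mono_left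
                (nhdsWithin_mono _ fun t ht => ne_of_gt ht)
            have hev1 := hs.eventually_lt_const hneg
            filter_upwards [hev1, self_mem_nhdsWithin] with t hst ht0
            have ht0' : (0:ℝ) < t := ht0
            rw [slope_def_field] at hst
            have h0 : φ i (x + (0:ℝ) • w) = 0 := by
              rw [zero_smul, add_zero, hact]
            rw [h0, sub_zero, sub_zero] at hst
            have := (div_neg_iff).mp hst
            rcases this with ⟨h7, h8⟩ | ⟨h7, h8⟩
            · linarith
            · linarith
          · have hlt : φ i x < 0 := lt_of_le_of_ne (hxC i) hact
            have hcont : Filter.Tendsto (fun t : ℝ => φ i (x + t • w)) (nhds 0)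
                (nhds (φ i (x + (0:ℝ) • w))) := hψ.continuousAt
            have h0 : φ i (x + (0:ℝ) • w) = φ i x := by rw [zero_smul, add_zero]
            rw [h0] at hcont
            have hev1 := hcont.eventually_lt_const hlt
            exact (hev1.filter_mono nhdsWithin_le_nhds).mono fun t ht => ht.le
        have hall : ∀ᶠ t in nhdsWithin (0:ℝ) (Set.Ioi 0), ∀ i, φ i (x + t • w) ≤ 0 :=
          Filter.eventually_all.mpr hev
        obtain ⟨t, htC, ht0⟩ := (hall.and self_mem_nhdsWithin).exists
        have ht0' : (0:ℝ) < t := ht0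
        have hmem : x + t • w ∈ C := by rw [hC]; exact htC
        have := hnc _ hmem
        rw [add_sub_cancel_left, real_inner_smul_right] at this
        nlinarith
      obtain ⟨l, hl, hsum⟩ := hgS
      refine ⟨fun i => if φ i x = 0 then l i else 0, ?_, ?_, ?_⟩
      · intro i
        by_cases hact : φ i x = 0
        · simpa [hact] using hl i
        · simp [hact]
      · intro i
        by_cases hact : φ i x = 0
        · simp [hact]
        · simp [hact]
      · rw [hsum]
        apply Finset.sum_congr rfl
        intro i _
        by_cases hact : φ i x = 0
        · rw [hu]; simp [hact]
        · rw [hu]; simp [hact]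
    · rintro ⟨lam, hlam0, hcs, rfl⟩
      intro y
      rw [hind x, hind y, if_pos hx, zero_add]
      by_cases hy : y ∈ C
      · rw [if_pos hy]
        have hyC : ∀ i, φ i y ≤ 0 := by rw [hC] at hy; exact hy
        have hineq : ⟪∑ i, lam i • gφ i x, y - x⟫ ≤ 0 := by
          rw [sum_inner]
          have bound : ∀ i : Fin k, ⟪lam i • gφ i x, y - x⟫ ≤ lam i * φ i y := by
            intro i
            rw [real_inner_smul_left]
            have hgi := auxGradIneq (hconv i) (hgrad i x) y
            have hcsi := hcs i
            nlinarith [hlam0 i]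
          calc ∑ i, ⟪lam i • gφ i x, y - x⟫ ≤ ∑ i, lam i * φ i y :=
                Finset.sum_le_sum fun i _ => bound i
            _ ≤ 0 := Finset.sum_nonpos fun i _ =>
                mul_nonpos_of_nonneg_of_nonpos (hlam0 i) (hyC i)
        exact_mod_cast hineq
      · rw [if_neg hy]; exact le_top
  · -- x ∉ C
    intro x hx
    rw [hsubdiff x]
    ext g
    simp only [Set.mem_setOf_eq, Set.mem_empty_iff_false, iff_false]
    intro h
    have h1 := h xbar
    rw [hind x, hind xbar, if_neg hx, if_pos hxbarC] at h1
    rw [EReal.top_add_of_ne_bot (EReal.coe_ne_bot _)] at h1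
    exact EReal.zero_ne_top (top_le_iff.mp h1)
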